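/- arXiv:1802.04923 — 6 statements merged into one kernel-verified Lean document; each statement's English description precedes it below -/
import Mathlib

section
/- (Proposition 1) Let M ≥ 1, let b ∈ ℂ^M have |b_k| = 1 for all k, and let φ ∈ ℝ be nondegenerate. Then the equivalent transmitted symbol s = (1/√M)·Σ_{k=1}^{M} conj(b_k)·x(φ)_k satisfies |s| > √(M/2). -/
/-- `sgn t = 1` if `t > 0` and `-1` otherwise. -/
noncomputable def sgn (t : ℝ) : ℝ := if 0 < t then 1 else -1

/-- One-bit complex sign: `sign(c) = sgn(Re c) + i·sgn(Im c)`. -/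
noncomputable def csign (c : ℂ) : ℂ := (sgn c.re : ℂ) + (sgn c.im : ℂ) * Complex.I

/-- `φ` is nondegenerate for `b` if `Re(b_k e^{iφ}) ≠ 0` and `Im(b_k e^{iφ}) ≠ 0` for all `k`. -/
def Nondeg {M : ℕ} (b : Fin M → ℂ) (φ : ℝ) : Prop :=
  ∀ k, (b k * Complex.exp (φ * Complex.I)).re ≠ 0 ∧
    (b k * Complex.exp (φ * Complex.I)).im ≠ 0

/-- The one-bit beamforming vector `x(φ)_k = (1/√2)·sign(b_k e^{iφ})`. -/
noncomputable def xphi {M : ℕ} (b : Fin M → ℂ) (φ : ℝ) : Fin M → ℂ :=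
  fun k => ((1 / Real.sqrt 2 : ℝ) : ℂ) * csign (b k * Complex.exp (φ * Complex.I))

lemma re_conj_mul_csign (c : ℂ) :
    ((starRingEnd ℂ) c * csign c).re = c.re * sgn c.re + c.im * sgn c.im := by
  simp [csign, Complex.mul_re, Complex.add_re, Complex.add_im, Complex.mul_im]

lemma sgn_mul_self (a : ℝ) : a * sgn a = |a| := by
  unfold sgn
  rcases lt_trichotomy 0 a with h | h | h
  · simp [h, abs_of_pos h]
  · simp [← h]
  · rw [if_neg (by linarith), abs_of_neg h]; ring

/-- **Proposition 1.** For nondegenerate `φ`, the equivalent transmitted symbol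
`s = (1/√M)·Σ_k conj(b_k)·x(φ)_k` satisfies `|s| > √(M/2)`. -/
theorem abs_symbol_xphi_gt (M : ℕ) (hM : 1 ≤ M) (b : Fin M → ℂ)
    (hb : ∀ k, ‖b k‖ = 1) (φ : ℝ) (hφ : Nondeg b φ) :
    ‖((1 / Real.sqrt M : ℝ) : ℂ) * ∑ k, (starRingEnd ℂ) (b k) * xphi b φ k‖
      > Real.sqrt (M / 2) := by
  set u := Complex.exp (φ * Complex.I) with hu
  have hut : ‖u‖ = 1 := Complex.norm_exp_ofReal_mul_I φ
  set S := ∑ k, (starRingEnd ℂ) (b k) * xphi b φ k with hS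
  have hfold : (starRingEnd ℂ) u * S =
      ∑ k, ((1 / Real.sqrt 2 : ℝ) : ℂ) * ((starRingEnd ℂ) (b k * u) * csign (b k * u)) := by
    rw [hS, Finset.mul_sum]
    refine Finset.sum_congr rfl fun k _ => ?_
    simp only [xphi, map_mul, ← hu]
    ring
  have h2 : (0:ℝ) < Real.sqrt 2 := Real.sqrt_pos.2 (by norm_num)
  have key : (M : ℝ) / Real.sqrt 2 < ((starRingEnd ℂ) u * S).re := by
    rw [hfold, Complex.re_sum]
    have : (M : ℝ) / Real.sqrt 2 = ∑ _k : Fin M, (1 / Real.sqrt 2) * 1 := by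
      simp; ring
    rw [this]
    refine Finset.sum_lt_sum_of_nonempty ?_ fun k _ => ?_
    · exact Finset.univ_nonempty_iff.2 ⟨⟨0, hM⟩⟩
    · have hre := (hφ k).1
      have him := (hφ k).2
      have habs : (b k * u).re ^ 2 + (b k * u).im ^ 2 = 1 := by
        have := Complex.sq_norm (b k * u)
        rw [norm_mul, hb k, hut] at this
        simpa [Complex.normSq_apply, sq] using this.symm
      have hrew : (((1 / Real.sqrt 2 : ℝ) : ℂ) *
          ((starRingEnd ℂ) (b k * u) * csign (b k * u))).re
          = (1 / Real.sqrt 2) * (|(b k * u).re| + |(b k * u).im|) := by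
        rw [Complex.re_ofReal_mul, re_conj_mul_csign, sgn_mul_self, sgn_mul_self]
      rw [hrew]
      have h1 : 1 < |(b k * u).re| + |(b k * u).im| := by
        nlinarith [abs_pos.2 hre, abs_pos.2 him, sq_abs (b k * u).re,
          sq_abs (b k * u).im, abs_nonneg (b k * u).re, abs_nonneg (b k * u).im]
      have := mul_lt_mul_of_pos_left h1 (by positivity : (0:ℝ) < 1 / Real.sqrt 2)
      linarith
  have hM' : (0:ℝ) < Real.sqrt M := Real.sqrt_pos.2 (by exact_mod_cast hM)
  have hSabs : (M : ℝ) / Real.sqrt 2 < ‖S‖ := by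
    calc (M : ℝ) / Real.sqrt 2 < ((starRingEnd ℂ) u * S).re := key
    _ ≤ ‖(starRingEnd ℂ) u * S‖ := Complex.re_le_norm _
    _ = ‖S‖ := by rw [norm_mul, Complex.norm_conj, hut, one_mul]
  rw [norm_mul, Complex.norm_real, Real.norm_eq_abs, abs_of_pos (by positivity : (0:ℝ) < 1 / Real.sqrt M)]
  have hm : Real.sqrt M * Real.sqrt M = (M:ℝ) := Real.mul_self_sqrt (by positivity)
  have hgoal : Real.sqrt (M / 2) = (1 / Real.sqrt M) * ((M : ℝ) / Real.sqrt 2) := by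
    rw [Real.sqrt_div (Nat.cast_nonneg M) 2, ← hm]
    field_simp
    rw [Real.sqrt_sq hM'.le]
  rw [hgoal]
  exact mul_lt_mul_of_pos_left hSabs (by positivity)
end

section
/- Let M ≥ 1, let b ∈ ℂ^M have |b_k| = 1 for all k, and let φ ∈ ℝ be nondegenerate. If x ∈ X is any vector in the one-bit alphabet such that Re(e^{−iφ}·conj(b_k)·x_k) > 1/√2 for every k (i.e., the argument of conj(b_k)·x_k lies in (φ − π/4, φ + π/4) for all k), then x = x(φ). In other words, x(φ) is the unique element of X whose entries all fall in this angular window. -/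
/-- The one-bit alphabet `X = {x : x_k ∈ {(±1 ± i)/√2} for all k}`. -/
noncomputable def oneBit (M : ℕ) : Set (Fin M → ℂ) :=
  {x | ∀ k, x k ∈ ({(1 + Complex.I) / Real.sqrt 2, (1 - Complex.I) / Real.sqrt 2,
    (-1 + Complex.I) / Real.sqrt 2, (-1 - Complex.I) / Real.sqrt 2} : Set ℂ)}

lemma key_sgn (a d s t : ℝ) (hs : s = 1 ∨ s = -1) (ht : t = 1 ∨ t = -1)
    (ha : |a| ≤ 1) (hd : |d| ≤ 1) (h : 1 < s * a + t * d) :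
    sgn a = s ∧ sgn d = t := by
  have h1 : t * d ≤ 1 := by
    calc t * d ≤ |t * d| := le_abs_self _
    _ = |t| * |d| := abs_mul t d
    _ ≤ 1 := by rcases ht with h' | h' <;> simp [h'] <;> linarith
  have h2 : s * a ≤ 1 := by
    calc s * a ≤ |s * a| := le_abs_self _
    _ = |s| * |a| := abs_mul s a
    _ ≤ 1 := by rcases hs with h' | h' <;> simp [h'] <;> linarith
  have hsa : 0 < s * a := by linarith
  have htd : 0 < t * d := by linarith
  constructor
  · rcases hs with h' | h' <;> subst h' <;> unfold sgn
    · rw [if_pos (by linarith)]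
    · rw [if_neg (by intro hp; nlinarith)]
  · rcases ht with h' | h' <;> subst h' <;> unfold sgn
    · rw [if_pos (by linarith)]
    · rw [if_neg (by intro hp; nlinarith)]

/-- If `x ∈ X` satisfies `Re(e^{−iφ}·conj(b_k)·x_k) > 1/√2` for every `k`, then `x = x(φ)`:
`x(φ)` is the unique element of `X` whose entries all fall in the angular window
`(φ − π/4, φ + π/4)`. -/
theorem eq_xphi_of_aligned (M : ℕ) (hM : 1 ≤ M) (b : Fin M → ℂ)
    (hb : ∀ k, ‖b k‖ = 1) (φ : ℝ) (hφ : Nondeg b φ)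
    (x : Fin M → ℂ) (hx : x ∈ oneBit M)
    (h : ∀ k, (Complex.exp (-(φ : ℂ) * Complex.I) * ((starRingEnd ℂ) (b k) * x k)).re
      > 1 / Real.sqrt 2) :
    x = xphi b φ := by
  have hs2 : (0:ℝ) < Real.sqrt 2 := Real.sqrt_pos.mpr (by norm_num)
  funext k
  set c : ℂ := b k * Complex.exp (φ * Complex.I) with hc
  have habs : ‖c‖ = 1 := by
    rw [hc, norm_mul, hb k, Complex.norm_exp_ofReal_mul_I, one_mul]
  have hre1 : |c.re| ≤ 1 := habs ▸ Complex.abs_re_le_norm c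
  have him1 : |c.im| ≤ 1 := habs ▸ Complex.abs_im_le_norm c
  have hconj : Complex.exp (-(φ : ℂ) * Complex.I) * (starRingEnd ℂ) (b k)
      = (starRingEnd ℂ) c := by
    have hcc : (starRingEnd ℂ) ((φ : ℂ) * Complex.I) = -(φ : ℂ) * Complex.I := by
      simp [Complex.conj_I]
    rw [hc, map_mul, ← Complex.exp_conj, hcc]
    ring
  have hk : 1 / Real.sqrt 2 < ((starRingEnd ℂ) c * x k).re := by
    have := h k
    rwa [← mul_assoc, hconj] at this
  have hformula : ((starRingEnd ℂ) c * x k).re = c.re * (x k).re + c.im * (x k).im := by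
    simp [Complex.mul_re]
  -- get s, t
  obtain ⟨s, t, hs, ht, hxk⟩ : ∃ s t : ℝ, (s = 1 ∨ s = -1) ∧ (t = 1 ∨ t = -1) ∧
      x k = ((s : ℂ) + (t : ℂ) * Complex.I) / (Real.sqrt 2 : ℝ) := by
    have hmem := hx k
    simp only [oneBit, Set.mem_setOf_eq, Set.mem_insert_iff, Set.mem_singleton_iff] at hmem
    rcases hmem with h' | h' | h' | h'
    · exact ⟨1, 1, Or.inl rfl, Or.inl rfl, by rw [h']; congr 1; push_cast; ring⟩
    · exact ⟨1, -1, Or.inl rfl, Or.inr rfl, by rw [h']; congr 1; push_cast; ring⟩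
    · exact ⟨-1, 1, Or.inr rfl, Or.inl rfl, by rw [h']; congr 1; push_cast; ring⟩
    · exact ⟨-1, -1, Or.inr rfl, Or.inr rfl, by rw [h']; congr 1; push_cast; ring⟩
  have hre : (x k).re = s / Real.sqrt 2 := by
    rw [hxk]; simp [Complex.div_ofReal_re]
  have him : (x k).im = t / Real.sqrt 2 := by
    rw [hxk]; simp [Complex.div_ofReal_im]
  have hineq : 1 < s * c.re + t * c.im := by
    rw [hformula, hre, him] at hk
    rw [← div_lt_div_iff_of_pos_right hs2]
    calc 1 / Real.sqrt 2 < c.re * (s / Real.sqrt 2) + c.im * (t / Real.sqrt 2) := hk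
    _ = (s * c.re + t * c.im) / Real.sqrt 2 := by ring
  obtain ⟨hsg, htg⟩ := key_sgn c.re c.im s t hs ht hre1 him1 hineq
  rw [hxk, xphi]
  simp only [← hc, csign, hsg, htg]
  push_cast
  field_simp
end

section
/- Let A ∈ ℂ with A ≠ 0, and let c, c̃ ∈ ℂ with |c| = |c̃| = 1. If Re(conj(A)·c̃) > (√2/2)·|A| and Re(conj(A)·c) ≤ (√2/2)·|A|, then |A − c + c̃| > |A|. -/
/-- Single-coordinate exchange inequality: if `|c| = |c̃| = 1`,
`Re(conj(A)·c̃) > (√2/2)·|A|` and `Re(conj(A)·c) ≤ (√2/2)·|A|`, then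
`|A − c + c̃| > |A|`. -/
theorem exchange_inequality (A c c' : ℂ) (hA : A ≠ 0)
    (hc : ‖c‖ = 1) (hc' : ‖c'‖ = 1)
    (h1 : ((starRingEnd ℂ) A * c').re > Real.sqrt 2 / 2 * ‖A‖)
    (h2 : ((starRingEnd ℂ) A * c).re ≤ Real.sqrt 2 / 2 * ‖A‖) :
    ‖A - c + c'‖ > ‖A‖ := by
  have key : Complex.normSq A < Complex.normSq (A - c + c') := by
    have hre : ((starRingEnd ℂ) A * (c' - c)).re > 0 := by
      rw [mul_sub, Complex.sub_re]
      linarith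
    have heq : A - c + c' = A + (c' - c) := by ring
    have hconj : (A * (starRingEnd ℂ) (c' - c)).re
        = ((starRingEnd ℂ) A * (c' - c)).re := by
      rw [show A * (starRingEnd ℂ) (c' - c)
          = (starRingEnd ℂ) ((starRingEnd ℂ) A * (c' - c)) by
        simp [mul_comm], Complex.conj_re]
    rw [heq, Complex.normSq_add, hconj]
    nlinarith [Complex.normSq_nonneg (c' - c)]
  rw [Complex.norm_def, Complex.norm_def]
  exact Real.sqrt_lt_sqrt (Complex.normSq_nonneg _) key
end

section
/- Let M ≥ 1, let b ∈ ℂ^M have |b_k| = 1 for all k, and let x ∈ X be a vector in the one-bit alphabet. Set A = Σ_{k=1}^{M} conj(b_k)·x_k and suppose A ≠ 0, the phase φ_A = arg(A) is nondegenerate, and x ≠ x(φ_A). Then there exists x' ∈ X (obtained from x by changing a single coordinate) with |Σ_{k=1}^{M} conj(b_k)·x'_k| > |A|. -/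
lemma xphi_mem_alphabet (c : ℂ) :
    ((1 / Real.sqrt 2 : ℝ) : ℂ) * csign c ∈ ({(1 + Complex.I) / Real.sqrt 2,
      (1 - Complex.I) / Real.sqrt 2, (-1 + Complex.I) / Real.sqrt 2,
      (-1 - Complex.I) / Real.sqrt 2} : Set ℂ) := by
  have h2 : (Real.sqrt 2 : ℂ) ≠ 0 := by
    norm_cast
    positivity
  unfold csign sgn
  by_cases h1 : 0 < c.re <;> by_cases h3 : 0 < c.im <;>
    simp only [h1, h3, if_true, if_false, Set.mem_insert_iff, Set.mem_singleton_iff] <;>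
    push_cast <;>
    [skip; right; right; right] <;>
    [left; left; right; right] <;>
    [skip; skip; left; right] <;>
    field_simp <;> ring

lemma sgn_le {p a r : ℝ} (hp : p ≠ 0) (hr : 0 < r) (ha : a = r ∨ a = -r) :
    p * a ≤ p * (r * sgn p) := by
  unfold sgn
  rcases hp.lt_or_gt with h | h <;> rcases ha with rfl | rfl <;>
    simp [h, not_lt.mpr h.le, lt_asymm h] <;> nlinarith

lemma sgn_lt {p a r : ℝ} (hp : p ≠ 0) (hr : 0 < r) (ha : a = r ∨ a = -r)
    (hne : a ≠ r * sgn p) : p * a < p * (r * sgn p) := by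
  unfold sgn at hne ⊢
  rcases hp.lt_or_gt with h | h <;> rcases ha with rfl | rfl <;>
    simp [h, not_lt.mpr h.le, lt_asymm h] at hne ⊢ <;> nlinarith

/-- If `x ∈ X`, `A = Σ_k conj(b_k)·x_k ≠ 0`, `φ_A = arg A` is nondegenerate and
`x ≠ x(φ_A)`, then changing a single coordinate of `x` yields `x' ∈ X` with
`|Σ_k conj(b_k)·x'_k| > |A|`. -/
theorem exists_single_coordinate_improvement (M : ℕ) (hM : 1 ≤ M) (b : Fin M → ℂ)
    (hb : ∀ k, ‖b k‖ = 1) (x : Fin M → ℂ) (hx : x ∈ oneBit M)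
    (hA : (∑ k, (starRingEnd ℂ) (b k) * x k) ≠ 0)
    (hnd : Nondeg b (∑ k, (starRingEnd ℂ) (b k) * x k).arg)
    (hne : x ≠ xphi b (∑ k, (starRingEnd ℂ) (b k) * x k).arg) :
    ∃ x' ∈ oneBit M, (∃ n, ∀ k, k ≠ n → x' k = x k) ∧
      ‖∑ k, (starRingEnd ℂ) (b k) * x' k‖
        > ‖∑ k, (starRingEnd ℂ) (b k) * x k‖ := by
  set A := ∑ k, (starRingEnd ℂ) (b k) * x k with hAdef
  obtain ⟨n, hn⟩ := Function.ne_iff.mp hne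
  set u := Complex.exp ((A.arg : ℂ) * Complex.I) with hu
  set c := b n * u with hc
  obtain ⟨hcre, hcim⟩ := hnd n
  set v := xphi b A.arg n with hv
  set x' := Function.update x n v with hx'
  have hvdef : v = ((1 / Real.sqrt 2 : ℝ) : ℂ) * csign c := rfl
  have hr : (0:ℝ) < 1 / Real.sqrt 2 := by positivity
  have hvre : v.re = (1 / Real.sqrt 2) * sgn c.re := by
    rw [hvdef, Complex.re_ofReal_mul]; simp [csign]
  have hvim : v.im = (1 / Real.sqrt 2) * sgn c.im := by
    rw [hvdef, Complex.im_ofReal_mul]; simp [csign]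
  have hre : (x n).re = (1 / Real.sqrt 2) ∨ (x n).re = -(1 / Real.sqrt 2) := by
    rcases hx n with h | h | h | h <;> rw [h] <;>
      simp [Complex.div_ofReal_re] <;> ring_nf <;> simp
  have him : (x n).im = (1 / Real.sqrt 2) ∨ (x n).im = -(1 / Real.sqrt 2) := by
    rcases hx n with h | h | h | h <;> rw [h] <;>
      simp [Complex.div_ofReal_im] <;> ring_nf <;> simp
  have hne' : (x n).re ≠ v.re ∨ (x n).im ≠ v.im := by
    by_contra h
    push_neg at h
    exact hn (Complex.ext h.1 h.2)
  have hkey : (0:ℝ) < ((starRingEnd ℂ) c * (v - x n)).re := by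
    have h1 : ((starRingEnd ℂ) c * (v - x n)).re =
        (c.re * v.re + c.im * v.im) - (c.re * (x n).re + c.im * (x n).im) := by
      simp [Complex.mul_re, Complex.sub_re, Complex.sub_im]; ring
    rw [h1, hvre, hvim]
    rcases hne' with h | h
    · rw [hvre] at h
      have h2 := sgn_lt hcre hr hre h
      have h3 := sgn_le hcim hr him
      linarith
    · rw [hvim] at h
      have h2 := sgn_le hcre hr hre
      have h3 := sgn_lt hcim hr him h
      linarith
  refine ⟨x', ?_, ⟨n, fun k hk => Function.update_of_ne hk _ _⟩, ?_⟩
  · intro k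
    by_cases hk : k = n
    · subst hk
      rw [hx', Function.update_self, hvdef]
      exact xphi_mem_alphabet c
    · rw [hx', Function.update_of_ne hk]
      exact hx k
  · have hsum : ∑ k, (starRingEnd ℂ) (b k) * x' k
        = A + (starRingEnd ℂ) (b n) * (v - x n) := by
      have step : ∀ k ∈ Finset.univ, (starRingEnd ℂ) (b k) * x' k =
          (starRingEnd ℂ) (b k) * x k
            + (if k = n then (starRingEnd ℂ) (b n) * (v - x n) else 0) := by
        intro k _
        by_cases hk : k = n
        · subst hk
          rw [hx', Function.update_self]
          simp
          ring
        · rw [hx', Function.update_of_ne hk]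
          simp [hk]
      rw [Finset.sum_congr rfl step, Finset.sum_add_distrib, Finset.sum_ite_eq']
      simp [hAdef]
    have habs_u : ‖u‖ = 1 := Complex.norm_exp_ofReal_mul_I _
    have hA_eq : (‖A‖ : ℂ) * u = A := Complex.norm_mul_exp_arg_mul_I A
    have hnormSq : u * (starRingEnd ℂ) u = 1 := by
      rw [Complex.mul_conj]
      rw [Complex.normSq_eq_norm_sq, habs_u]
      norm_num
    have hmain : ((∑ k, (starRingEnd ℂ) (b k) * x' k) * (starRingEnd ℂ) u).re =
        ‖A‖ + ((starRingEnd ℂ) c * (v - x n)).re := by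
      rw [hsum]
      have hAu : A * (starRingEnd ℂ) u = (‖A‖ : ℂ) := by
        conv_lhs => rw [← hA_eq]
        rw [mul_assoc, hnormSq, mul_one]
      have : (A + (starRingEnd ℂ) (b n) * (v - x n)) * (starRingEnd ℂ) u =
          (‖A‖ : ℂ) + (starRingEnd ℂ) c * (v - x n) := by
        calc (A + (starRingEnd ℂ) (b n) * (v - x n)) * (starRingEnd ℂ) u
            = A * (starRingEnd ℂ) u
              + ((starRingEnd ℂ) (b n) * (starRingEnd ℂ) u) * (v - x n) := by ring
          _ = (‖A‖ : ℂ) + (starRingEnd ℂ) c * (v - x n) := by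
              rw [hAu, hc, map_mul]
      rw [this]
      simp
    calc ‖A‖
        < ‖A‖ + ((starRingEnd ℂ) c * (v - x n)).re := by linarith
      _ = ((∑ k, (starRingEnd ℂ) (b k) * x' k) * (starRingEnd ℂ) u).re := hmain.symm
      _ ≤ ‖(∑ k, (starRingEnd ℂ) (b k) * x' k) * (starRingEnd ℂ) u‖ :=
          Complex.re_le_norm _
      _ = ‖∑ k, (starRingEnd ℂ) (b k) * x' k‖ := by
          rw [norm_mul, Complex.norm_conj, habs_u, mul_one]
end

section
/- Let M ≥ 1 and let b ∈ ℂ^M have |b_k| = 1 for all k. Then the set X̃ = {x(φ) : φ ∈ ℝ nondegenerate} is finite and has at most 4M elements. -/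
/-- Index of the next grid point of `-θ + (π/2)ℤ` strictly after `φ`. -/
noncomputable def nextIdx (θ φ : ℝ) : ℤ := ⌊(φ + θ) * 2 / Real.pi⌋ + 1

/-- The next grid point of `-θ + (π/2)ℤ` strictly after `φ`. -/
noncomputable def nextPt (θ φ : ℝ) : ℝ := -θ + (nextIdx θ φ : ℝ) * (Real.pi / 2)

lemma lt_nextPt (θ φ : ℝ) : φ < nextPt θ φ := by
  have hπ : (0:ℝ) < Real.pi := Real.pi_pos
  have h := Int.lt_floor_add_one ((φ + θ) * 2 / Real.pi)
  rw [div_lt_iff₀ hπ] at h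
  unfold nextPt nextIdx
  push_cast
  nlinarith [h]

lemma nextPt_min (θ φ : ℝ) (j : ℤ) (h : φ < -θ + (j : ℝ) * (Real.pi / 2)) :
    nextPt θ φ ≤ -θ + (j : ℝ) * (Real.pi / 2) := by
  have hπ : (0:ℝ) < Real.pi := Real.pi_pos
  have h1 : (φ + θ) * 2 / Real.pi < (j : ℝ) := by
    rw [div_lt_iff₀ hπ]; nlinarith [h]
  have h2 : nextIdx θ φ ≤ j := by
    have := Int.floor_lt.2 h1
    unfold nextIdx; omega
  have h3 : ((nextIdx θ φ : ℤ) : ℝ) ≤ (j : ℝ) := by exact_mod_cast h2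
  unfold nextPt
  have hπ2 : (0:ℝ) ≤ Real.pi / 2 := by positivity
  nlinarith [mul_le_mul_of_nonneg_right h3 hπ2]

lemma nextIdx_mono (θ : ℝ) {φ ψ : ℝ} (h : φ ≤ ψ) : nextIdx θ φ ≤ nextIdx θ ψ := by
  unfold nextIdx
  have : (φ + θ) * 2 / Real.pi ≤ (ψ + θ) * 2 / Real.pi := by
    gcongr
  exact add_le_add_left (Int.floor_le_floor this) 1

lemma sgn_eq_of_no_zero {f : ℝ → ℝ} (hf : Continuous f) {a b : ℝ} (hab : a ≤ b)
    (h : ∀ t ∈ Set.Icc a b, f t ≠ 0) : sgn (f a) = sgn (f b) := by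
  have ha := h a (Set.left_mem_Icc.2 hab)
  have hb := h b (Set.right_mem_Icc.2 hab)
  have key : 0 < f a ↔ 0 < f b := by
    constructor
    · intro hpos
      by_contra hneg
      have hlt : f b < 0 := lt_of_le_of_ne (not_lt.1 hneg) hb
      obtain ⟨t, ht, ht0⟩ := intermediate_value_Icc' hab hf.continuousOn ⟨hlt.le, hpos.le⟩
      exact h t ht ht0
    · intro hpos
      by_contra hneg
      have hlt : f a < 0 := lt_of_le_of_ne (not_lt.1 hneg) ha
      obtain ⟨t, ht, ht0⟩ := intermediate_value_Icc hab hf.continuousOn ⟨hlt.le, hpos.le⟩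
      exact h t ht ht0
  simp only [sgn]
  rw [if_congr key rfl rfl]

set_option maxHeartbeats 1000000 in
/-- The set `X̃ = {x(φ) : φ nondegenerate}` is finite with at most `4M` elements. -/
theorem xphi_range_finite_card_le (M : ℕ) (hM : 1 ≤ M) (b : Fin M → ℂ)
    (hb : ∀ k, ‖b k‖ = 1) :
    {x : Fin M → ℂ | ∃ φ : ℝ, Nondeg b φ ∧ x = xphi b φ}.Finite ∧
      {x : Fin M → ℂ | ∃ φ : ℝ, Nondeg b φ ∧ x = xphi b φ}.ncard ≤ 4 * M := by
  classical
  set X := {x : Fin M → ℂ | ∃ φ : ℝ, Nondeg b φ ∧ x = xphi b φ} with hX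
  choose θ hθ using fun k => (Complex.norm_eq_one_iff (b k)).1 (hb k)
  have hπ : (0:ℝ) < Real.pi := Real.pi_pos
  have hmul : ∀ (k : Fin M) (φ : ℝ), b k * Complex.exp ((φ:ℂ) * Complex.I)
      = Complex.exp (((θ k + φ : ℝ) : ℂ) * Complex.I) := by
    intro k φ
    rw [← hθ k, ← Complex.exp_add]
    push_cast
    ring_nf
  have hre : ∀ (k : Fin M) (φ : ℝ),
      (b k * Complex.exp ((φ:ℂ) * Complex.I)).re = Real.cos (θ k + φ) := by
    intro k φ; rw [hmul]; exact Complex.exp_ofReal_mul_I_re _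
  have him : ∀ (k : Fin M) (φ : ℝ),
      (b k * Complex.exp ((φ:ℂ) * Complex.I)).im = Real.sin (θ k + φ) := by
    intro k φ; rw [hmul]; exact Complex.exp_ofReal_mul_I_im _
  have hnd : ∀ φ : ℝ, Nondeg b φ →
      ∀ k, Real.cos (θ k + φ) ≠ 0 ∧ Real.sin (θ k + φ) ≠ 0 := by
    intro φ h k
    have := h k
    rwa [hre, him] at this
  -- next boundary point
  have hne : (Finset.univ : Finset (Fin M)).Nonempty := ⟨⟨0, hM⟩, Finset.mem_univ _⟩
  set n : ℝ → ℝ := fun φ => Finset.univ.inf' hne (fun k => nextPt (θ k) φ) with hn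
  have hlt_n : ∀ φ, φ < n φ := fun φ =>
    (Finset.lt_inf'_iff hne).2 fun k _ => lt_nextPt _ _
  have hn_le : ∀ (φ : ℝ) (k : Fin M), n φ ≤ nextPt (θ k) φ := fun φ k =>
    Finset.inf'_le _ (Finset.mem_univ k)
  -- constancy of the sign pattern up to the next boundary point
  have hconst : ∀ φ ψ : ℝ, Nondeg b φ → φ ≤ ψ → ψ < n φ → xphi b φ = xphi b ψ := by
    intro φ ψ hφ hle hlt
    funext k
    have hcos : sgn (Real.cos (θ k + φ)) = sgn (Real.cos (θ k + ψ)) := by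
      apply sgn_eq_of_no_zero (f := fun t => Real.cos (θ k + t))
        (by fun_prop) hle
      intro t ht h0
      obtain ⟨j, hj⟩ := Real.cos_eq_zero_iff.1 h0
      have ht' : t = -θ k + ((2 * j + 1 : ℤ) : ℝ) * (Real.pi / 2) := by
        push_cast
        push_cast at hj
        linarith
      rcases eq_or_lt_of_le ht.1 with heq | hgt
      · exact (hnd φ hφ k).1 (heq ▸ h0)
      · have hmin := nextPt_min (θ k) φ (2 * j + 1) (ht' ▸ hgt)
        rw [← ht'] at hmin
        have := hn_le φ k
        linarith [ht.2]
    have hsin : sgn (Real.sin (θ k + φ)) = sgn (Real.sin (θ k + ψ)) := by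
      apply sgn_eq_of_no_zero (f := fun t => Real.sin (θ k + t))
        (by fun_prop) hle
      intro t ht h0
      obtain ⟨j, hj⟩ := Real.sin_eq_zero_iff.1 h0
      have ht' : t = -θ k + ((2 * j : ℤ) : ℝ) * (Real.pi / 2) := by
        push_cast
        push_cast at hj
        linarith
      rcases eq_or_lt_of_le ht.1 with heq | hgt
      · exact (hnd φ hφ k).2 (heq ▸ h0)
      · have hmin := nextPt_min (θ k) φ (2 * j) (ht' ▸ hgt)
        rw [← ht'] at hmin
        have := hn_le φ k
        linarith [ht.2]
    show ((1 / Real.sqrt 2 : ℝ) : ℂ) * csign _ = ((1 / Real.sqrt 2 : ℝ) : ℂ) * csign _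
    unfold csign
    rw [hre, hre, him, him, hcos, hsin]
  -- reduction modulo 2π to a fundamental window anchored at a grid point
  have h2π : (0:ℝ) < 2 * Real.pi := by positivity
  set k₀ : Fin M := ⟨0, hM⟩ with hk₀
  set c : ℝ := nextPt (θ k₀) 0 with hc
  have hexp_eq : ∀ φ : ℝ,
      Complex.exp (((toIcoMod h2π c φ : ℝ) : ℂ) * Complex.I)
        = Complex.exp ((φ:ℂ) * Complex.I) := by
    intro φ
    have h1 : φ - toIcoMod h2π c φ = toIcoDiv h2π c φ • (2 * Real.pi) :=
      self_sub_toIcoMod h2π c φ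
    rw [zsmul_eq_mul] at h1
    have h2 : (φ:ℂ) * Complex.I = ((toIcoMod h2π c φ : ℝ) : ℂ) * Complex.I
        + ((toIcoDiv h2π c φ : ℤ) : ℂ) * (2 * (Real.pi : ℂ) * Complex.I) := by
      have hr : (φ:ℝ) = toIcoMod h2π c φ + (toIcoDiv h2π c φ : ℝ) * (2 * Real.pi) := by
        linarith
      have hrC : (φ:ℂ) = ((toIcoMod h2π c φ : ℝ) : ℂ)
          + ((toIcoDiv h2π c φ : ℤ) : ℂ) * (2 * (Real.pi : ℂ)) := by
        exact_mod_cast congrArg (fun t : ℝ => (t : ℂ)) hr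
      rw [hrC]
      ring
    rw [h2, Complex.exp_add, Complex.exp_int_mul_two_pi_mul_I, mul_one]
  have hshift : ∀ φ : ℝ, Nondeg b φ →
      Nondeg b (toIcoMod h2π c φ) ∧ xphi b (toIcoMod h2π c φ) = xphi b φ := by
    intro φ h
    constructor
    · intro k
      have := h k
      rwa [hexp_eq φ]
    · funext k
      unfold xphi
      rw [hexp_eq]
  -- the finite target set
  set T : Finset ℝ := Finset.image
    (fun p : Fin M × Fin 4 =>
      -θ p.1 + ((nextIdx (θ p.1) c + (p.2 : ℤ) : ℤ) : ℝ) * (Real.pi / 2))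
    Finset.univ with hT
  have hmem : ∀ ψ : ℝ, c ≤ ψ → ψ < c + 2 * Real.pi → n ψ ∈ T := by
    intro ψ h1 h2
    obtain ⟨k, -, hk⟩ := Finset.exists_mem_eq_inf' hne (fun k => nextPt (θ k) ψ)
    have hJle : nextIdx (θ k) c ≤ nextIdx (θ k) ψ := nextIdx_mono _ h1
    -- upper bound : n ψ ≤ c + 2π
    have hub : n ψ ≤ c + 2 * Real.pi := by
      have hψlt : ψ < -θ k₀ + ((nextIdx (θ k₀) 0 + 4 : ℤ) : ℝ) * (Real.pi / 2) := by
        have : c = -θ k₀ + ((nextIdx (θ k₀) 0 : ℤ) : ℝ) * (Real.pi / 2) := rfl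
        push_cast
        push_cast at this
        nlinarith [h2, this]
      have hmin := nextPt_min (θ k₀) ψ (nextIdx (θ k₀) 0 + 4) hψlt
      have hle0 := hn_le ψ k₀
      have hceq : c = -θ k₀ + ((nextIdx (θ k₀) 0 : ℤ) : ℝ) * (Real.pi / 2) := rfl
      push_cast at hmin hceq
      nlinarith [hmin, hle0, hceq]
    -- index upper bound
    have hidx : nextIdx (θ k) ψ < nextIdx (θ k) c + 4 := by
      by_contra hcon
      push_neg at hcon
      have hcast : ((nextIdx (θ k) c + 4 : ℤ) : ℝ) ≤ ((nextIdx (θ k) ψ : ℤ) : ℝ) := by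
        exact_mod_cast hcon
      have hcgt : c < nextPt (θ k) c := lt_nextPt _ _
      have : nextPt (θ k) ψ ≤ c + 2 * Real.pi := by rw [← hk]; exact hub
      unfold nextPt at this hcgt
      push_cast at hcast
      nlinarith [this, hcgt, hcast, hπ]
    refine Finset.mem_image.2
      ⟨(k, ⟨(nextIdx (θ k) ψ - nextIdx (θ k) c).toNat, by omega⟩), Finset.mem_univ _, ?_⟩
    have hval : (nextIdx (θ k) c
        + (((nextIdx (θ k) ψ - nextIdx (θ k) c).toNat : ℕ) : ℤ)) = nextIdx (θ k) ψ := by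
      omega
    have hk' : n ψ = nextPt (θ k) ψ := hk
    simp only
    rw [hval, hk']
    rfl
  -- the injection
  set F : (Fin M → ℂ) → ℝ :=
    fun x => if h : ∃ φ : ℝ, Nondeg b φ ∧ x = xphi b φ then
      n (toIcoMod h2π c h.choose) else 0 with hF
  have hFspec : ∀ (x) (h : ∃ φ : ℝ, Nondeg b φ ∧ x = xphi b φ),
      Nondeg b (toIcoMod h2π c h.choose) ∧ x = xphi b (toIcoMod h2π c h.choose)
        ∧ F x = n (toIcoMod h2π c h.choose) := by
    intro x h
    obtain ⟨hnd', hxeq⟩ := hshift h.choose h.choose_spec.1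
    exact ⟨hnd', h.choose_spec.2.trans hxeq.symm, dif_pos h⟩
  have hmaps : Set.MapsTo F X ↑T := by
    intro x h
    obtain ⟨-, -, h3⟩ := hFspec x h
    rw [h3]
    have hico := toIcoMod_mem_Ico h2π c h.choose
    exact hmem _ hico.1 hico.2
  have hinj : Set.InjOn F X := by
    intro x hx y hy hxy
    obtain ⟨hndx, hxe, hFx⟩ := hFspec x hx
    obtain ⟨hndy, hye, hFy⟩ := hFspec y hy
    have hnn : n (toIcoMod h2π c hx.choose) = n (toIcoMod h2π c hy.choose) := by
      rw [← hFx, ← hFy, hxy]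
    rcases le_total (toIcoMod h2π c hx.choose) (toIcoMod h2π c hy.choose) with h | h
    · rw [hxe, hye]
      exact hconst _ _ hndx h (hnn ▸ hlt_n _)
    · rw [hxe, hye]
      exact (hconst _ _ hndy h (hnn ▸ hlt_n _)).symm
  have hfin : X.Finite :=
    Set.Finite.of_finite_image (T.finite_toSet.subset hmaps.image_subset) hinj
  refine ⟨hfin, ?_⟩
  have h1 : X.ncard = (F '' X).ncard := (Set.ncard_image_of_injOn hinj).symm
  have h2 : (F '' X).ncard ≤ (↑T : Set ℝ).ncard :=
    Set.ncard_le_ncard hmaps.image_subset T.finite_toSet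
  have h3 : (↑T : Set ℝ).ncard = T.card := Set.ncard_coe_finset T
  have h4 : T.card ≤ 4 * M := by
    calc T.card ≤ (Finset.univ : Finset (Fin M × Fin 4)).card := Finset.card_image_le
      _ = M * 4 := by simp
      _ = 4 * M := Nat.mul_comm _ _
  omega
end

section
/- Any four points z_1, z_2, z_3, z_4 in the closed disk {z ∈ ℂ : |z| ≤ R} (R > 0) contain two distinct indices j ≠ k with |z_j − z_k| ≤ √2·R; i.e., the minimum pairwise distance of any four points in a disk of radius R is at most √2·R. -/
private lemma quad_contra (xa ya xb yb xc yc xd yd : ℝ)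
    (ha1 : 0 ≤ xa) (ha2 : 0 ≤ ya) (hb1 : xb < 0) (hb2 : 0 ≤ yb)
    (hc1 : xc < 0) (hc2 : yc < 0) (hd1 : 0 ≤ xd) (hd2 : yd < 0)
    (h1 : xa*xb + ya*yb < 0) (h2 : xb*xc + yb*yc < 0)
    (h3 : xc*xd + yc*yd < 0) (h4 : xd*xa + yd*ya < 0) : False := by
  have k1 : (ya*yb) * (yc*yd) < (-(xa*xb)) * (-(xc*xd)) :=
    mul_lt_mul'' (by linarith) (by linarith) (mul_nonneg ha2 hb2) (by nlinarith)
  have k2 : (xb*xc) * (xd*xa) < (-(yb*yc)) * (-(yd*ya)) :=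
    mul_lt_mul'' (by linarith) (by linarith) (by nlinarith) (mul_nonneg hd1 ha1)
  nlinarith [k1, k2]

private lemma dot_nonneg_dist (R : ℝ) (hR : 0 < R) (a b : ℂ)
    (ha : ‖a‖ ≤ R) (hb : ‖b‖ ≤ R)
    (hdot : 0 ≤ a.re * b.re + a.im * b.im) :
    ‖a - b‖ ≤ Real.sqrt 2 * R := by
  have h2R : Real.sqrt 2 * R = Real.sqrt (2 * R ^ 2) := by
    rw [Real.sqrt_mul (by norm_num), Real.sqrt_sq hR.le]
  rw [h2R, Complex.norm_def]
  apply Real.sqrt_le_sqrt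
  have hna : Complex.normSq a ≤ R ^ 2 := by
    have := Complex.sq_norm a
    nlinarith [norm_nonneg a]
  have hnb : Complex.normSq b ≤ R ^ 2 := by
    have := Complex.sq_norm b
    nlinarith [norm_nonneg b]
  simp only [Complex.normSq_apply, Complex.sub_re, Complex.sub_im] at *
  nlinarith

private lemma exists_dot_nonneg (z : Fin 4 → ℂ) :
    ∃ j k : Fin 4, j ≠ k ∧ 0 ≤ (z j).re * (z k).re + (z j).im * (z k).im := by
  by_contra hcon
  push_neg at hcon
  have h : ∀ j k : Fin 4, j ≠ k → (z j).re * (z k).re + (z j).im * (z k).im < 0 :=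
    fun j k hjk => hcon j k hjk
  classical
  set f : Fin 4 → Bool × Bool := fun i => (decide ((z i).re < 0), decide ((z i).im < 0)) with hf
  by_cases hinj : Function.Injective f
  · have hbij : Function.Bijective f := by
      rw [Fintype.bijective_iff_injective_and_card]
      exact ⟨hinj, by simp⟩
    obtain ⟨a, ha⟩ := hbij.2 (false, false)
    obtain ⟨b, hb⟩ := hbij.2 (true, false)
    obtain ⟨c, hc⟩ := hbij.2 (true, true)
    obtain ⟨d, hd⟩ := hbij.2 (false, true)
    simp only [hf, Prod.mk.injEq, decide_eq_false_iff_not, decide_eq_true_eq, not_lt] at ha hb hc hd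
    have hab : a ≠ b := fun e => by rw [e] at ha; exact absurd hb.1 (not_lt.mpr ha.1)
    have hbc : b ≠ c := fun e => by rw [e] at hb; exact absurd hc.2 (not_lt.mpr hb.2)
    have hcd : c ≠ d := fun e => by rw [e] at hc; exact absurd hd.1 (not_le.mpr hc.1)
    have hda : d ≠ a := fun e => by rw [e] at hd; exact absurd hd.2 (not_lt.mpr ha.2)
    exact quad_contra (z a).re (z a).im (z b).re (z b).im (z c).re (z c).im (z d).re (z d).im
      ha.1 ha.2 hb.1 hb.2 hc.1 hc.2 hd.1 hd.2
      (h a b hab) (h b c hbc) (h c d hcd) (h d a hda)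
  · rw [Function.not_injective_iff] at hinj
    obtain ⟨i, j, hfij, hij⟩ := hinj
    simp only [hf, Prod.mk.injEq, decide_eq_decide] at hfij
    have hre : 0 ≤ (z i).re * (z j).re := by
      rcases lt_or_ge (z i).re 0 with h1 | h1
      · have h2 := hfij.1.mp h1
        exact le_of_lt (mul_pos_of_neg_of_neg h1 h2)
      · have h2 : ¬ (z j).re < 0 := fun h2 => absurd (hfij.1.mpr h2) (not_lt.mpr h1)
        exact mul_nonneg h1 (not_lt.mp h2)
    have him : 0 ≤ (z i).im * (z j).im := by
      rcases lt_or_ge (z i).im 0 with h1 | h1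
      · have h2 := hfij.2.mp h1
        exact le_of_lt (mul_pos_of_neg_of_neg h1 h2)
      · have h2 : ¬ (z j).im < 0 := fun h2 => absurd (hfij.2.mpr h2) (not_lt.mpr h1)
        exact mul_nonneg h1 (not_lt.mp h2)
    exact absurd (h i j hij) (not_lt.mpr (by linarith))

/-- Any four points in the closed disk of radius `R > 0` centered at `0` in `ℂ` contain
two distinct indices whose points are at distance at most `√2·R`. -/
theorem four_points_in_disk (R : ℝ) (hR : 0 < R) (z : Fin 4 → ℂ)
    (hz : ∀ j, ‖z j‖ ≤ R) :
    ∃ j k, j ≠ k ∧ ‖z j - z k‖ ≤ Real.sqrt 2 * R := by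
  obtain ⟨j, k, hjk, hdot⟩ := exists_dot_nonneg z
  exact ⟨j, k, hjk, dot_nonneg_dist R hR (z j) (z k) (hz j) (hz k) hdot⟩
end
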